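/- Every CA-AG-groupoid is paramedial; that is, if a magma S satisfies the left invertive law and cyclic associativity, then (a·b)·(c·d) = (d·b)·(c·a) for all a,b,c,d in S. -/
import Mathlib

theorem CA_AG_groupoid_is_paramedial {S : Type*} [Mul S]
    (li : ∀ a b c : S, (a * b) * c = (c * b) * a)
    (ca : ∀ a b c : S, a * (b * c) = c * (a * b)) :
    ∀ a b c d : S, (a * b) * (c * d) = (d * b) * (c * a) := by
  intro a b c d
  calc (a * b) * (c * d)
      = d * ((a * b) * c) := ca _ _ _
    _ = d * ((c * b) * a) := by rw [li a b c]
    _ = a * (d * (c * b)) := ca _ _ _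
    _ = a * (b * (d * c)) := by rw [ca d c b]
    _ = b * ((d * c) * a) := (ca _ _ _).symm
    _ = b * ((a * c) * d) := by rw [li d c a]
    _ = d * (b * (a * c)) := ca _ _ _
    _ = d * (a * (c * b)) := by rw [ca a c b]
    _ = a * ((c * b) * d) := (ca _ _ _).symm
    _ = a * ((d * b) * c) := by rw [li c b d]
    _ = (d * b) * (c * a) := (ca _ _ _).symm
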